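/- An m × n matrix (a_ij) with nonnegative entries, prescribed row sums m_i and column sums n_j, is an extreme point of the convex set A = {a_ij ≥ 0 : Σ_j a_ij = m_i, Σ_i a_ij = n_j} if and only if it is acyclic. -/

import Mathlib

open Finset

lemma cycle_flip {m n k' : ℕ} (d : Matrix (Fin m) (Fin n) ℝ)
    (r : Fin (k' + 1) → Fin m) (c : Fin (k' + 1) → Fin n)
    (hr : Function.Injective r) (hc : Function.Injective c)
    (h1 : ∀ u, d (r u) (c u) ≠ 0) (h2 : ∀ u, d (r u) (c (u - 1)) ≠ 0) :
    ∃ (i : Fin (k' + 1) → Fin m) (j : Fin (k' + 1) → Fin n),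
      Function.Injective i ∧ Function.Injective j ∧
      ∀ l, d (i l) (j l) ≠ 0 ∧ d (i l) (j (finRotate (k' + 1) l)) ≠ 0 := by
  refine ⟨fun u => r (-u), fun u => c (-u), hr.comp neg_injective, hc.comp neg_injective,
    fun l => ⟨h1 (-l), ?_⟩⟩
  show d (r (-l)) (c (-(finRotate (k' + 1) l))) ≠ 0
  rw [finRotate_succ_apply]
  have h : -(l + 1) = -l - 1 := by abel
  rw [h]
  exact h2 (-l)

lemma exists_cycle {m n : ℕ} {d : Matrix (Fin m) (Fin n) ℝ}
    (hrow : ∀ i, ∑ j, d i j = 0) (hcol : ∀ j, ∑ i, d i j = 0) (hd : d ≠ 0) :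
    ∃ k, 2 ≤ k ∧ ∃ (i : Fin k → Fin m) (j : Fin k → Fin n),
      Function.Injective i ∧ Function.Injective j ∧
      ∀ l, d (i l) (j l) ≠ 0 ∧ d (i l) (j (finRotate k l)) ≠ 0 := by
  classical
  have rowstep : ∀ i j, d i j ≠ 0 → ∃ j', j' ≠ j ∧ d i j' ≠ 0 := by
    intro i j h
    by_contra hc
    push_neg at hc
    have : ∑ j', d i j' = d i j :=
      Finset.sum_eq_single j (fun b _ hb => hc b hb) (by simp)
    rw [hrow] at this
    exact h this.symm
  have colstep : ∀ i j, d i j ≠ 0 → ∃ i', i' ≠ i ∧ d i' j ≠ 0 := by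
    intro i j h
    by_contra hc
    push_neg at hc
    have : ∑ i', d i' j = d i j :=
      Finset.sum_eq_single i (fun b _ hb => hc b hb) (by simp)
    rw [hcol] at this
    exact h this.symm
  have step : ∀ p : {p : Fin m × Fin n // d p.1 p.2 ≠ 0},
      ∃ q : {p : Fin m × Fin n // d p.1 p.2 ≠ 0},
        q.1.2 ≠ p.1.2 ∧ q.1.1 ≠ p.1.1 ∧ d p.1.1 q.1.2 ≠ 0 := by
    rintro ⟨⟨i, j⟩, h⟩
    obtain ⟨j', hj', hdj'⟩ := rowstep i j h
    obtain ⟨i', hi', hdi'⟩ := colstep i j' hdj'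
    exact ⟨⟨(i', j'), hdi'⟩, hj', hi', hdj'⟩
  choose next h1 h2 h3 using step
  obtain ⟨p0, hp0⟩ : ∃ p : Fin m × Fin n, d p.1 p.2 ≠ 0 := by
    by_contra hc
    push_neg at hc
    exact hd (by ext x y; exact hc (x, y))
  set f : ℕ → {p : Fin m × Fin n // d p.1 p.2 ≠ 0} := fun t => next^[t] ⟨p0, hp0⟩ with hf
  have hfs : ∀ t, f (t + 1) = next (f t) := fun t => Function.iterate_succ_apply' next t _
  set I : ℕ → Fin m := fun t => (f t).1.1 with hI
  set J : ℕ → Fin n := fun t => (f t).1.2 with hJ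
  have hIJ : ∀ t, d (I t) (J t) ≠ 0 := fun t => (f t).2
  have hJne : ∀ t, J (t + 1) ≠ J t := fun t => by rw [hJ]; simp only [hfs]; exact h1 (f t)
  have hIne : ∀ t, I (t + 1) ≠ I t := fun t => by rw [hI]; simp only [hfs]; exact h2 (f t)
  have hIJ' : ∀ t, d (I t) (J (t + 1)) ≠ 0 := fun t => by
    have := h3 (f t); rw [← hfs] at this; exact this
  set v : ℕ → Fin m ⊕ Fin n :=
    fun t => if t % 2 = 0 then Sum.inr (J (t / 2)) else Sum.inl (I (t / 2)) with hv
  have hv0 : ∀ t, v (2 * t) = Sum.inr (J t) := by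
    intro t
    have e1 : (2 * t) % 2 = 0 := by omega
    have e2 : (2 * t) / 2 = t := by omega
    simp [hv, e1, e2]
  have hv1 : ∀ t, v (2 * t + 1) = Sum.inl (I t) := by
    intro t
    have e1 : (2 * t + 1) % 2 = 1 := by omega
    have e2 : (2 * t + 1) / 2 = t := by omega
    simp [hv, e1, e2]
  have hex : ∃ T, ∃ S, S < T ∧ v S = v T := by
    obtain ⟨x, y, hxy, hvxy⟩ := Finite.exists_ne_map_eq_of_infinite v
    rcases lt_or_gt_of_ne hxy with h | h
    · exact ⟨y, x, h, hvxy⟩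
    · exact ⟨x, y, h, hvxy.symm⟩
  set T := Nat.find hex with hT
  obtain ⟨S, hST, hvST⟩ := Nat.find_spec hex
  rw [← hT] at hST hvST
  have hinj : ∀ p q, p < q → q < T → v p ≠ v q := by
    intro p q hpq hqT heq
    exact Nat.find_min hex hqT ⟨p, hpq, heq⟩
  rcases Nat.even_or_odd S with ⟨s, hs⟩ | ⟨s, hs⟩
  · -- even case: S = 2s, T = 2t, column repeat
    obtain ⟨t, ht⟩ : ∃ t, T = 2 * t := by
      rcases Nat.even_or_odd T with ⟨t, ht⟩ | ⟨t, ht⟩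
      · exact ⟨t, by omega⟩
      · exfalso
        have h1 : S = 2 * s := by omega
        have h2 : T = 2 * t + 1 := by omega
        rw [h1, h2, hv0, hv1] at hvST
        exact Sum.inr_ne_inl hvST
    have hS2 : S = 2 * s := by omega
    have hJst : J s = J t := by
      have := hvST
      rw [hS2, ht, hv0, hv0] at this
      exact Sum.inr.inj this
    have hst : s < t := by omega
    have htne : t ≠ s + 1 := by
      intro h
      exact hJne s (h ▸ hJst.symm)
    obtain ⟨k1, hk1⟩ : ∃ k1, t = s + (k1 + 2) := ⟨t - s - 2, by omega⟩
    -- injectivity helpers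
    have hJinj : ∀ p q, p < q → q < t → J p ≠ J q := by
      intro p q hpq hq heq
      exact hinj (2 * p) (2 * q) (by omega) (by omega) (by rw [hv0, hv0, heq])
    have hIinj : ∀ p q, p < q → 2 * q + 1 < T → I p ≠ I q := by
      intro p q hpq hq heq
      exact hinj (2 * p + 1) (2 * q + 1) (by omega) hq (by rw [hv1, hv1, heq])
    refine ⟨k1 + 2, by omega, fun u => I (s + u.val), fun u => J (s + u.val), ?_, ?_, ?_⟩
    · intro u u' heq
      by_contra hne
      have hne' : u.val ≠ u'.val := fun h => hne (Fin.ext h)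
      have hu := u.isLt
      have hu' := u'.isLt
      rcases lt_or_gt_of_ne hne' with h | h
      · exact hIinj (s + u.val) (s + u'.val) (by omega) (by omega) heq
      · exact hIinj (s + u'.val) (s + u.val) (by omega) (by omega) heq.symm
    · intro u u' heq
      by_contra hne
      have hne' : u.val ≠ u'.val := fun h => hne (Fin.ext h)
      have hu := u.isLt
      have hu' := u'.isLt
      rcases lt_or_gt_of_ne hne' with h | h
      · exact hJinj (s + u.val) (s + u'.val) (by omega) (by omega) heq
      · exact hJinj (s + u'.val) (s + u.val) (by omega) (by omega) heq.symm
    · intro l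
      refine ⟨hIJ (s + l.val), ?_⟩
      show d (I (s + l.val)) (J (s + (finRotate (k1 + 2) l).val)) ≠ 0
      rw [finRotate_succ_apply]
      by_cases hl : l = Fin.last (k1 + 1)
      · have hval : ((l + 1 : Fin (k1 + 2))).val = 0 := by
          rw [hl]
          simp
        rw [hval, hl]
        simp only [Nat.add_zero, Fin.val_last]
        rw [hJst]
        have e : t = s + (k1 + 1) + 1 := by omega
        rw [e]
        exact hIJ' (s + (k1 + 1))
      · have hval : ((l + 1 : Fin (k1 + 2))).val = l.val + 1 := by
          rw [Fin.val_add_one]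
          simp [hl]
        rw [hval]
        exact hIJ' (s + l.val)
  · -- odd case: S = 2s+1, T = 2t+1, row repeat
    obtain ⟨t, ht⟩ : ∃ t, T = 2 * t + 1 := by
      rcases Nat.even_or_odd T with ⟨t, ht⟩ | ⟨t, ht⟩
      · exfalso
        have h1 : S = 2 * s + 1 := by omega
        have h2 : T = 2 * t := by omega
        rw [h1, h2, hv0, hv1] at hvST
        exact Sum.inl_ne_inr hvST
      · exact ⟨t, by omega⟩
    have hS2 : S = 2 * s + 1 := by omega
    have hIst : I s = I t := by
      have := hvST
      rw [hS2, ht, hv1, hv1] at this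
      exact Sum.inl.inj this
    have hst : s < t := by omega
    have htne : t ≠ s + 1 := by
      intro h
      exact hIne s (h ▸ hIst.symm)
    obtain ⟨k1, hk1⟩ : ∃ k1, t = s + (k1 + 2) := ⟨t - s - 2, by omega⟩
    have hJinj : ∀ p q, p < q → 2 * q < T → J p ≠ J q := by
      intro p q hpq hq heq
      exact hinj (2 * p) (2 * q) (by omega) hq (by rw [hv0, hv0, heq])
    have hIinj : ∀ p q, p < q → q < t → I p ≠ I q := by
      intro p q hpq hq heq
      exact hinj (2 * p + 1) (2 * q + 1) (by omega) (by omega) (by rw [hv1, hv1, heq])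
    have hrinj : Function.Injective (fun u : Fin (k1 + 2) => I (s + u.val)) := by
      intro u u' heq
      by_contra hne
      have hne' : u.val ≠ u'.val := fun h => hne (Fin.ext h)
      have hu := u.isLt
      have hu' := u'.isLt
      rcases lt_or_gt_of_ne hne' with h | h
      · exact hIinj (s + u.val) (s + u'.val) (by omega) (by omega) heq
      · exact hIinj (s + u'.val) (s + u.val) (by omega) (by omega) heq.symm
    have hcinj : Function.Injective (fun u : Fin (k1 + 2) => J (s + u.val + 1)) := by
      intro u u' heq
      by_contra hne
      have hne' : u.val ≠ u'.val := fun h => hne (Fin.ext h)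
      have hu := u.isLt
      have hu' := u'.isLt
      rcases lt_or_gt_of_ne hne' with h | h
      · exact hJinj (s + u.val + 1) (s + u'.val + 1) (by omega) (by omega) heq
      · exact hJinj (s + u'.val + 1) (s + u.val + 1) (by omega) (by omega) heq.symm
    have hback : ∀ u : Fin (k1 + 2),
        d ((fun u : Fin (k1 + 2) => I (s + u.val)) u)
          ((fun u : Fin (k1 + 2) => J (s + u.val + 1)) (u - 1)) ≠ 0 := by
      intro u
      show d (I (s + u.val)) (J (s + (u - 1 : Fin (k1 + 2)).val + 1)) ≠ 0
      by_cases hu : u = 0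
      · have hval : ((u - 1 : Fin (k1 + 2))).val = k1 + 1 := by
          rw [hu]
          simp [Fin.coe_sub_one]
        rw [hval, hu]
        have e : s + (k1 + 1) + 1 = t := by omega
        rw [e]
        show d (I (s + 0)) (J t) ≠ 0
        have e2 : s + 0 = s := rfl
        rw [e2, hIst]
        exact hIJ t
      · have hval : ((u - 1 : Fin (k1 + 2))).val = u.val - 1 := by
          rw [Fin.coe_sub_one]
          simp [hu]
        rw [hval]
        have hu1 : 1 ≤ u.val := by
          rcases Nat.eq_zero_or_pos u.val with h | h
          · exact absurd (Fin.ext h : u = 0) hu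
          · exact h
        have e : s + (u.val - 1) + 1 = s + u.val := by omega
        rw [e]
        exact hIJ (s + u.val)
    obtain ⟨i, j, hi, hj, hij⟩ :=
      cycle_flip (k' := k1 + 1) d (fun u => I (s + u.val)) (fun u => J (s + u.val + 1))
        hrinj hcinj (fun u => hIJ' (s + u.val)) hback
    exact ⟨k1 + 2, by omega, i, j, hi, hj, hij⟩

/-- A nonnegative `m × n` matrix with prescribed row sums `rs` and column sums
`cs` is an extreme point of the convex set of all such matrices if and only if
it is acyclic: every cyclic product through `k ≥ 2` distinct rows and columns
whose "diagonal" entries are nonzero must vanish. -/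
theorem extreme_iff_acyclic
    {m n : ℕ} (rs : Fin m → ℝ) (cs : Fin n → ℝ)
    (A : Set (Matrix (Fin m) (Fin n) ℝ))
    (hA : A = {b : Matrix (Fin m) (Fin n) ℝ |
        (∀ i j, 0 ≤ b i j) ∧ (∀ i, ∑ j, b i j = rs i) ∧ (∀ j, ∑ i, b i j = cs j)})
    (a : Matrix (Fin m) (Fin n) ℝ) (ha : a ∈ A) :
    a ∈ Set.extremePoints ℝ A ↔
      (∀ (k : ℕ), 2 ≤ k → ∀ (i : Fin k → Fin m) (j : Fin k → Fin n),
        Function.Injective i → Function.Injective j →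
        (∀ l, a (i l) (j l) ≠ 0) → ∏ l, a (i l) (j (finRotate k l)) = 0) := by
  classical
  have haA := ha
  rw [hA] at haA
  obtain ⟨ha1, ha2, ha3⟩ := haA
  constructor
  · -- extreme → acyclic
    rintro ⟨-, hext⟩ k hk i j hi hj hdiag
    by_contra hprod
    have hoff : ∀ l, a (i l) (j (finRotate k l)) ≠ 0 := by
      intro l h0
      exact hprod (Finset.prod_eq_zero (Finset.mem_univ l) h0)
    obtain ⟨k1, rfl⟩ : ∃ k1, k = k1 + 2 := ⟨k - 2, by omega⟩
    have hnofix : ∀ l : Fin (k1 + 2), finRotate (k1 + 2) l ≠ l := by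
      intro l h
      rw [finRotate_succ_apply] at h
      have h1 : (1 : Fin (k1 + 2)) = 0 := by
        have := add_eq_left.mp h
        exact this
      exact absurd (congrArg Fin.val h1) (by simp)
    -- the perturbation matrix
    set D : Matrix (Fin m) (Fin n) ℝ := fun x y =>
      ∑ l, ((if x = i l ∧ y = j l then (1 : ℝ) else 0)
        - (if x = i l ∧ y = j (finRotate (k1 + 2) l) then 1 else 0)) with hDdef
    have hDrow : ∀ x, ∑ y, D x y = 0 := by
      intro x
      rw [hDdef]
      rw [Finset.sum_comm]
      apply Finset.sum_eq_zero
      intro l _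
      rw [Finset.sum_sub_distrib]
      simp [ite_and]
    have hDcol : ∀ y, ∑ x, D x y = 0 := by
      intro y
      have e : ∀ x, D x y = ∑ l, ((if x = i l ∧ y = j l then (1 : ℝ) else 0)
          - (if x = i l ∧ y = j (finRotate (k1 + 2) l) then 1 else 0)) := fun x => by rw [hDdef]
      calc ∑ x, D x y
          = ∑ l, (∑ x, (if x = i l ∧ y = j l then (1 : ℝ) else 0)
            - ∑ x, (if x = i l ∧ y = j (finRotate (k1 + 2) l) then (1 : ℝ) else 0)) := by
            simp_rw [e, ← Finset.sum_sub_distrib]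
            rw [Finset.sum_comm]
        _ = ∑ l, ((if y = j l then (1 : ℝ) else 0)
            - (if y = j (finRotate (k1 + 2) l) then (1 : ℝ) else 0)) := by
            apply Finset.sum_congr rfl
            intro l _
            congr 1 <;> simp [ite_and]
        _ = 0 := by
            rw [Finset.sum_sub_distrib,
              Equiv.sum_comp (finRotate (k1 + 2)) (fun l => if y = j l then (1 : ℝ) else 0),
              sub_self]
    have hD1 : ∀ l, D (i l) (j l) = 1 := by
      intro l0
      rw [hDdef]
      beta_reduce
      rw [Finset.sum_eq_single l0]
      · have c1 : (i l0 = i l0 ∧ j l0 = j l0) := ⟨rfl, rfl⟩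
        have c2 : ¬(i l0 = i l0 ∧ j l0 = j (finRotate (k1 + 2) l0)) := by
          rintro ⟨-, hc⟩
          exact hnofix l0 (hj hc).symm
        rw [if_pos c1, if_neg c2, sub_zero]
      · intro b _ hb
        have c1 : ¬(i l0 = i b ∧ j l0 = j b) := by
          rintro ⟨hc, -⟩
          exact hb (hi hc).symm
        have c2 : ¬(i l0 = i b ∧ j l0 = j (finRotate (k1 + 2) b)) := by
          rintro ⟨hc, hc2⟩
          have : l0 = b := (hi hc)
          subst this
          exact hnofix l0 (hj hc2).symm
        rw [if_neg c1, if_neg c2, sub_zero]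
      · simp
    have hD2 : ∀ l, D (i l) (j (finRotate (k1 + 2) l)) = -1 := by
      intro l0
      rw [hDdef]
      beta_reduce
      rw [Finset.sum_eq_single l0]
      · have c1 : ¬(i l0 = i l0 ∧ j (finRotate (k1 + 2) l0) = j l0) := by
          rintro ⟨-, hc⟩
          exact hnofix l0 (hj hc)
        have c2 : (i l0 = i l0 ∧ j (finRotate (k1 + 2) l0) = j (finRotate (k1 + 2) l0)) :=
          ⟨rfl, rfl⟩
        rw [if_neg c1, if_pos c2, zero_sub]
      · intro b _ hb
        have c1 : ¬(i l0 = i b ∧ j (finRotate (k1 + 2) l0) = j b) := by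
          rintro ⟨hc, -⟩
          exact hb (hi hc).symm
        have c2 : ¬(i l0 = i b ∧ j (finRotate (k1 + 2) l0) = j (finRotate (k1 + 2) b)) := by
          rintro ⟨hc, -⟩
          exact hb (hi hc).symm
        rw [if_neg c1, if_neg c2, sub_zero]
      · simp
    -- epsilon
    have hne : (Finset.univ : Finset (Fin (k1 + 2))).Nonempty := Finset.univ_nonempty
    set ε : ℝ := Finset.univ.inf' hne
      (fun l => min (a (i l) (j l)) (a (i l) (j (finRotate (k1 + 2) l)))) with hεdef
    have hε : 0 < ε := by
      rw [hεdef, Finset.lt_inf'_iff]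
      intro l _
      exact lt_min ((ha1 _ _).lt_of_ne (Ne.symm (hdiag l)))
        ((ha1 _ _).lt_of_ne (Ne.symm (hoff l)))
    have hεdiag : ∀ l, ε ≤ a (i l) (j l) := fun l =>
      le_trans (Finset.inf'_le _ (Finset.mem_univ l)) (min_le_left _ _)
    have hεoff : ∀ l, ε ≤ a (i l) (j (finRotate (k1 + 2) l)) := fun l =>
      le_trans (Finset.inf'_le _ (Finset.mem_univ l)) (min_le_right _ _)
    -- nonnegativity of perturbed matrices
    have key : ∀ x y, 0 ≤ a x y + ε * D x y ∧ 0 ≤ a x y - ε * D x y := by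
      intro x y
      by_cases hc1 : ∃ l, x = i l ∧ y = j l
      · obtain ⟨l0, rfl, rfl⟩ := hc1
        rw [hD1 l0]
        constructor
        · nlinarith [hεdiag l0, hε.le]
        · nlinarith [hεdiag l0]
      · by_cases hc2 : ∃ l, x = i l ∧ y = j (finRotate (k1 + 2) l)
        · obtain ⟨l0, rfl, rfl⟩ := hc2
          rw [hD2 l0]
          constructor
          · nlinarith [hεoff l0]
          · nlinarith [hεoff l0, hε.le]
        · push_neg at hc1 hc2
          have hD0 : D x y = 0 := by
            rw [hDdef]
            beta_reduce
            apply Finset.sum_eq_zero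
            intro l _
            have c1 : ¬(x = i l ∧ y = j l) := by
              rintro ⟨h1, h2⟩
              exact hc1 l h1 h2
            have c2 : ¬(x = i l ∧ y = j (finRotate (k1 + 2) l)) := by
              rintro ⟨h1, h2⟩
              exact hc2 l h1 h2
            rw [if_neg c1, if_neg c2, sub_zero]
          rw [hD0]
          simp [ha1 x y]
    set x1 : Matrix (Fin m) (Fin n) ℝ := a + ε • D with hx1def
    set x2 : Matrix (Fin m) (Fin n) ℝ := a - ε • D with hx2def
    have hx1e : ∀ x y, x1 x y = a x y + ε * D x y := by
      intro x y
      rw [hx1def]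
      simp [Matrix.add_apply]
    have hx2e : ∀ x y, x2 x y = a x y - ε * D x y := by
      intro x y
      rw [hx2def]
      simp [Matrix.sub_apply]
    have hx1A : x1 ∈ A := by
      rw [hA]
      refine ⟨fun x y => by rw [hx1e]; exact (key x y).1, fun x => ?_, fun y => ?_⟩
      · simp_rw [hx1e]
        rw [Finset.sum_add_distrib, ← Finset.mul_sum, hDrow, mul_zero, add_zero]
        exact ha2 x
      · simp_rw [hx1e]
        rw [Finset.sum_add_distrib, ← Finset.mul_sum, hDcol, mul_zero, add_zero]
        exact ha3 y
    have hx2A : x2 ∈ A := by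
      rw [hA]
      refine ⟨fun x y => by rw [hx2e]; exact (key x y).2, fun x => ?_, fun y => ?_⟩
      · simp_rw [hx2e]
        rw [Finset.sum_sub_distrib, ← Finset.mul_sum, hDrow, mul_zero, sub_zero]
        exact ha2 x
      · simp_rw [hx2e]
        rw [Finset.sum_sub_distrib, ← Finset.mul_sum, hDcol, mul_zero, sub_zero]
        exact ha3 y
    have hseg : a ∈ openSegment ℝ x1 x2 := by
      refine ⟨1/2, 1/2, by norm_num, by norm_num, by norm_num, ?_⟩
      rw [hx1def, hx2def]
      module
    have he1 := hext hx1A hx2A hseg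
    have hcontra := congrFun (congrFun he1 (i 0)) (j 0)
    rw [hx1e, hD1 0] at hcontra
    nlinarith [hcontra]
  · -- acyclic → extreme
    intro h
    refine ⟨ha, ?_⟩
    intro x1 hx1 x2 hx2 hseg
    obtain ⟨θ, η, hθ, hη, hsum1, heq⟩ := hseg
    by_cases hxx : x1 = x2
    · subst hxx
      rw [← add_smul, hsum1, one_smul] at heq
      exact heq
    · exfalso
      rw [hA] at hx1 hx2
      obtain ⟨hb1, hb2, hb3⟩ := hx1
      obtain ⟨hc1, hc2, hc3⟩ := hx2
      set dM : Matrix (Fin m) (Fin n) ℝ := x1 - x2 with hdM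
      have hdrow : ∀ x, ∑ y, dM x y = 0 := by
        intro x
        rw [hdM]
        simp only [Matrix.sub_apply]
        rw [Finset.sum_sub_distrib, hb2, hc2, sub_self]
      have hdcol : ∀ y, ∑ x, dM x y = 0 := by
        intro y
        rw [hdM]
        simp only [Matrix.sub_apply]
        rw [Finset.sum_sub_distrib, hb3, hc3, sub_self]
      have hdne : dM ≠ 0 := sub_ne_zero.mpr hxx
      have hsupp : ∀ x y, dM x y ≠ 0 → a x y ≠ 0 := by
        intro x y hD ha0
        have he := congrFun (congrFun heq x) y
        simp only [Matrix.add_apply, Matrix.smul_apply, smul_eq_mul] at he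
        rw [ha0] at he
        have hp : x1 x y = 0 := by nlinarith [hb1 x y, hc1 x y]
        have hq : x2 x y = 0 := by nlinarith [hb1 x y, hc1 x y]
        apply hD
        rw [hdM]
        simp [Matrix.sub_apply, hp, hq]
      obtain ⟨k, hk, i, j, hi, hj, hcyc⟩ := exists_cycle hdrow hdcol hdne
      have hz := h k hk i j hi hj (fun l => hsupp _ _ (hcyc l).1)
      rw [Finset.prod_eq_zero_iff] at hz
      obtain ⟨l, -, hl⟩ := hz
      exact hsupp _ _ (hcyc l).2 hl
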